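/- The minimum over all admissible start times s ∈ [s_min, s_max] of the overlap length max(0, min(s+p, t2) - max(s, t1)) equals MI(t1,t2,a); moreover the minimum is attained at s = s_min or at s = s_max. -/

import Mathlib

/-- Minimum intersection of an activity (sMin, sMax, p) with interval [t1,t2]. -/
noncomputable def MI (sMin sMax p t1 t2 : ℝ) : ℝ :=
  max 0 (min (min p (t2 - t1)) (min (sMin + p - t1) (t2 - sMax)))

/-- Left derivative. -/
noncomputable def leftD (f : ℝ → ℝ) (x : ℝ) : ℝ := derivWithin f (Set.Iio x) x

/-- Right derivative. -/
noncomputable def rightD (f : ℝ → ℝ) (x : ℝ) : ℝ := derivWithin f (Set.Ioi x) x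

theorem mi_is_min_overlap (sMin sMax p t1 t2 : ℝ)
    (hs : sMin ≤ sMax) (hp : 0 ≤ p) (ht : t1 ≤ t2) :
    (∀ s : ℝ, sMin ≤ s → s ≤ sMax →
      MI sMin sMax p t1 t2 ≤ max 0 (min (s + p) t2 - max s t1)) ∧
    (max 0 (min (sMin + p) t2 - max sMin t1) = MI sMin sMax p t1 t2 ∨
     max 0 (min (sMax + p) t2 - max sMax t1) = MI sMin sMax p t1 t2) := by
  unfold MI
  constructor
  · intro s h1 h2
    apply max_le_max le_rfl
    have A : min (min p (t2-t1)) (min (sMin+p-t1) (t2-sMax)) ≤ p :=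
      le_trans (min_le_left _ _) (min_le_left _ _)
    have B : min (min p (t2-t1)) (min (sMin+p-t1) (t2-sMax)) ≤ t2-t1 :=
      le_trans (min_le_left _ _) (min_le_right _ _)
    have C : min (min p (t2-t1)) (min (sMin+p-t1) (t2-sMax)) ≤ sMin+p-t1 :=
      le_trans (min_le_right _ _) (min_le_left _ _)
    have D : min (min p (t2-t1)) (min (sMin+p-t1) (t2-sMax)) ≤ t2-sMax :=
      le_trans (min_le_right _ _) (min_le_right _ _)
    rcases le_total (s+p) t2 with h3|h3 <;> rcases le_total s t1 with h4|h4
    · rw [min_eq_left h3, max_eq_right h4]; linarith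
    · rw [min_eq_left h3, max_eq_left h4]; linarith
    · rw [min_eq_right h3, max_eq_right h4]; linarith
    · rw [min_eq_right h3, max_eq_left h4]; linarith
  · rcases le_total (sMin+p-t1) (t2-sMax) with h|h
    · left
      congr 1
      rcases le_total (sMin+p) t2 with h1|h1 <;> rcases le_total sMin t1 with h2|h2 <;>
        rcases le_total p (t2-t1) with h3|h3 <;>
        simp only [min_def, max_def] <;> split_ifs <;> linarith
    · right
      congr 1
      rcases le_total (sMax+p) t2 with h1|h1 <;> rcases le_total sMax t1 with h2|h2 <;>
        rcases le_total p (t2-t1) with h3|h3 <;>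
        simp only [min_def, max_def] <;> split_ifs <;> linarith
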